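/- arXiv:math/0308280 — 2 statements merged into one kernel-verified Lean document; each statement's English description precedes it below -/
import Mathlib

section
/- Let G be a finite simple graph with n vertices, edge set E(G) and set of isolated vertices Iso(G). For each index string I : V → {0,1} let a_I ∈ ℝ^{4|E(G)| + 2|Iso(G)|} be the 0/1 vector, with coordinates indexed by pairs (e, (α,β)) for e = {j,k} ∈ E(G) and (α,β) ∈ {0,1}² together with pairs (l, α) for l ∈ Iso(G) and α ∈ {0,1}, whose (e,(α,β)) coordinate is 1 iff (I(j), I(k)) = (α,β) and whose (l,α) coordinate is 1 iff I(l) = α. Then the affine span of the point set {a_I : I ∈ {0,1}^V} has dimension n + |E(G)|; that is, the polytope P_G = conv{a_I : I ∈ {0,1}^V} has dimension n + |E(G)|. -/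
set_option linter.unusedSectionVars false

namespace BinaryGraphModels

/-- The column `a_I` of the matrix `A_G`: the 0/1 marginal point of the index string `I`, with
one coordinate for each edge together with an unordered assignment of values to its endpoints
(encoded as an element of `Sym2 (V × Bool)`), and one coordinate for each pair of a vertex and
a value (used for isolated vertices). The `(e, (α,β))` coordinate is 1 iff
`(I j, I k) = (α, β)` where `e = {j, k}`, and the `(l, α)` coordinate is 1 iff `l` is isolated
and `I l = α`. -/
noncomputable def marginalPoint {V : Type} [Fintype V] [DecidableEq V] (G : SimpleGraph V)
    (I : V → Bool) : (Sym2 (V × Bool) ⊕ (V × Bool)) → ℝ := by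
  classical
  exact fun c =>
    match c with
    | Sum.inl m => if ∃ e ∈ G.edgeSet, Sym2.map (fun v => (v, I v)) e = m then 1 else 0
    | Sum.inr (l, α) => if (∀ k, ¬ G.Adj l k) ∧ I l = α then 1 else 0

/-- classical 0/1 indicator -/
noncomputable def ind (p : Prop) : ℝ := by classical exact if p then 1 else 0

lemma ind_congr {p q : Prop} (h : p ↔ q) : ind p = ind q := congrArg ind (propext h)

lemma ind_pos {p : Prop} (h : p) : ind p = 1 := by simp [ind, h]

lemma ind_neg {p : Prop} (h : ¬ p) : ind p = 0 := by simp [ind, h]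

variable {V : Type} [Fintype V] [DecidableEq V]

lemma marg_inl (G : SimpleGraph V) (I : V → Bool) (m : Sym2 (V × Bool)) :
    marginalPoint G I (Sum.inl m) =
      ind (∃ e ∈ G.edgeSet, Sym2.map (fun v => (v, I v)) e = m) := by
  by_cases h : (∃ e ∈ G.edgeSet, Sym2.map (fun v => (v, I v)) e = m)
  · rw [ind_pos h]; exact if_pos h
  · rw [ind_neg h]; exact if_neg h

lemma marg_inr (G : SimpleGraph V) (I : V → Bool) (l : V) (α : Bool) :
    marginalPoint G I (Sum.inr (l, α)) = ind ((∀ k, ¬ G.Adj l k) ∧ I l = α) := by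
  by_cases h : ((∀ k, ¬ G.Adj l k) ∧ I l = α)
  · rw [ind_pos h]; exact if_pos h
  · rw [ind_neg h]; exact if_neg h

lemma eq_of_map_eq {I : V → Bool} {e : Sym2 V} {m : Sym2 (V × Bool)}
    (h : Sym2.map (fun v => (v, I v)) e = m) : e = Sym2.map Prod.fst m := by
  subst h
  rw [Sym2.map_map]
  have h2 : (Prod.fst ∘ fun v : V => (v, I v)) = id := rfl
  rw [h2, Sym2.map_id, id]

lemma pair_eq {j k : V} (hjk : j ≠ k) {a b c d : Bool} :
    s((j, a), (k, b)) = s((j, c), (k, d)) ↔ (a = c ∧ b = d) := by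
  simp [Sym2.eq_iff, Prod.ext_iff, hjk]

lemma mapeq_iff (I : V → Bool) {j k : V} (hjk : j ≠ k) :
    Sym2.map (fun v => (v, I v)) s(j, k) = Sym2.map (fun v => (v, true)) s(j, k) ↔
      (I j = true ∧ I k = true) := by
  rw [Sym2.map_pair_eq, Sym2.map_pair_eq]
  exact pair_eq hjk

lemma eval_pair (G : SimpleGraph V) (I : V → Bool) {j k : V} (hadj : G.Adj j k) (α β : Bool) :
    marginalPoint G I (Sum.inl s((j, α), (k, β))) = ind (I j = α ∧ I k = β) := by
  have hjk : j ≠ k := hadj.ne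
  rw [marg_inl]
  refine ind_congr ⟨?_, ?_⟩
  · rintro ⟨e, he, hm⟩
    have he2 : e = s(j, k) := by
      have h := eq_of_map_eq hm
      simpa [Sym2.map_pair_eq] using h
    subst he2
    rw [Sym2.map_pair_eq] at hm
    exact (pair_eq hjk).mp hm
  · rintro ⟨h1, h2⟩
    exact ⟨s(j, k), hadj, by rw [Sym2.map_pair_eq, h1, h2]⟩

lemma eval_notE (G : SimpleGraph V) (I : V → Bool) {m : Sym2 (V × Bool)}
    (h : Sym2.map Prod.fst m ∉ G.edgeSet) : marginalPoint G I (Sum.inl m) = 0 := by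
  rw [marg_inl]
  refine ind_neg ?_
  rintro ⟨e, he, hm⟩
  exact h (eq_of_map_eq hm ▸ he)


/-- sign of a boolean -/
noncomputable def sgn (b : Bool) : ℝ := if b then 1 else -1

/-- indicator that a boolean is false -/
noncomputable def zf (b : Bool) : ℝ := if b then 0 else 1

/-- The affine coordinates of an index string. -/
noncomputable def phi (G : SimpleGraph V) (I : V → Bool) : (V ⊕ Sym2 V) → ℝ :=
  fun w =>
    match w with
    | Sum.inl v => ind (I v = true)
    | Sum.inr e => ind (e ∈ G.edgeSet ∧
        Sym2.map (fun v => (v, I v)) e = Sym2.map (fun v => (v, true)) e)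

lemma phi_inl (G : SimpleGraph V) (I : V → Bool) (v : V) :
    phi G I (Sum.inl v) = ind (I v = true) := rfl

lemma phi_inr (G : SimpleGraph V) (I : V → Bool) (e : Sym2 V) :
    phi G I (Sum.inr e) = ind (e ∈ G.edgeSet ∧
      Sym2.map (fun v => (v, I v)) e = Sym2.map (fun v => (v, true)) e) := rfl

/-- coordinate projection on the marginal-point space -/
noncomputable def prjW (w : Sym2 (V × Bool) ⊕ (V × Bool)) :
    ((Sym2 (V × Bool) ⊕ (V × Bool)) → ℝ) →ₗ[ℝ] ℝ := LinearMap.proj w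

/-- coordinate projection on the coordinate space -/
noncomputable def prjC (w : V ⊕ Sym2 V) : ((V ⊕ Sym2 V) → ℝ) →ₗ[ℝ] ℝ := LinearMap.proj w

lemma prjW_apply (w) (f : (Sym2 (V × Bool) ⊕ (V × Bool)) → ℝ) : prjW w f = f w := rfl
lemma prjC_apply (w) (f : (V ⊕ Sym2 V) → ℝ) : prjC w f = f w := rfl

/-- The projection recovering the affine coordinates from a marginal point. -/
noncomputable def Pmap (G : SimpleGraph V) :
    ((Sym2 (V × Bool) ⊕ (V × Bool)) → ℝ) →ₗ[ℝ] ((V ⊕ Sym2 V) → ℝ) := by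
  classical
  exact LinearMap.pi fun w =>
    match w with
    | Sum.inl v =>
      if h : ∃ k, G.Adj v k then
        prjW (Sum.inl s((v, true), (h.choose, true)))
          + prjW (Sum.inl s((v, true), (h.choose, false)))
      else prjW (Sum.inr (v, true))
    | Sum.inr e => prjW (Sum.inl (Sym2.map (fun v => (v, true)) e))

/-- The symmetric bilinear-coefficient function used to define `Lmap`. -/
noncomputable def cfun : (V × Bool) → (V × Bool) → (((V ⊕ Sym2 V) → ℝ) →ₗ[ℝ] ℝ) := fun p q =>
  (sgn p.2 * sgn q.2) • prjC (Sum.inr s(p.1, q.1))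
    + (sgn p.2 * zf q.2) • prjC (Sum.inl p.1)
    + (sgn q.2 * zf p.2) • prjC (Sum.inl q.1)

lemma cfun_symm (p q : V × Bool) : cfun p q = cfun q p := by
  unfold cfun
  rw [Sym2.eq_swap (a := p.1) (b := q.1), mul_comm (sgn p.2) (sgn q.2)]
  abel

/-- The linear map expressing marginal points in terms of affine coordinates. -/
noncomputable def Lmap (G : SimpleGraph V) :
    ((V ⊕ Sym2 V) → ℝ) →ₗ[ℝ] ((Sym2 (V × Bool) ⊕ (V × Bool)) → ℝ) := by
  classical
  exact LinearMap.pi fun w =>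
    match w with
    | Sum.inl m =>
      if Sym2.map Prod.fst m ∈ G.edgeSet then Sym2.lift ⟨cfun, cfun_symm⟩ m else 0
    | Sum.inr lα =>
      if ∀ k, ¬ G.Adj lα.1 k then
        (if lα.2 then prjC (Sum.inl lα.1) else - prjC (Sum.inl lα.1))
      else 0

lemma map_false_ne_true (e : Sym2 V) :
    Sym2.map (fun v : V => (v, false)) e ≠ Sym2.map (fun v : V => (v, true)) e := by
  induction e using Sym2.ind with
  | _ a b =>
    rw [Sym2.map_pair_eq, Sym2.map_pair_eq]
    simp [Sym2.eq_iff, Prod.ext_iff]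

lemma key1 (G : SimpleGraph V) (I : V → Bool) :
    marginalPoint G I - marginalPoint G (fun _ => false) = Lmap G (phi G I) := by
  funext w
  rw [Pi.sub_apply]
  cases w with
  | inl m =>
    induction m using Sym2.ind with
    | _ p q =>
      obtain ⟨j, α⟩ := p
      obtain ⟨k, β⟩ := q
      have hfst : Sym2.map Prod.fst s((j, α), (k, β)) = s(j, k) := by
        rw [Sym2.map_pair_eq]
      by_cases he : s(j, k) ∈ G.edgeSet
      · have hadj : G.Adj j k := (SimpleGraph.mem_edgeSet G).mp he
        have hjk : j ≠ k := hadj.ne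
        have hR : Lmap G (phi G I) (Sum.inl s((j, α), (k, β)))
            = (sgn α * sgn β) * phi G I (Sum.inr s(j, k))
              + (sgn α * zf β) * phi G I (Sum.inl j)
              + (sgn β * zf α) * phi G I (Sum.inl k) := by
          simp only [Lmap, LinearMap.pi_apply]
          rw [hfst, if_pos he, Sym2.lift_mk]
          simp only [cfun, LinearMap.add_apply, LinearMap.smul_apply, prjC_apply,
            smul_eq_mul]
        have hphi : phi G I (Sum.inr s(j, k)) = ind (I j = true ∧ I k = true) := by
          rw [phi_inr]
          exact ind_congr ⟨fun h => (mapeq_iff I hjk).mp h.2,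
            fun h => ⟨he, (mapeq_iff I hjk).mpr h⟩⟩
        rw [eval_pair G I hadj, eval_pair G _ hadj, hR, hphi, phi_inl, phi_inl]
        cases α <;> cases β <;> cases hj : I j <;> cases hk : I k <;>
          simp [sgn, zf, ind, hj, hk] <;> norm_num
      · have he' : Sym2.map Prod.fst s((j, α), (k, β)) ∉ G.edgeSet := by
          rw [hfst]; exact he
        rw [eval_notE G I he', eval_notE G _ he', sub_zero]
        simp only [Lmap, LinearMap.pi_apply]
        rw [hfst, if_neg he, LinearMap.zero_apply]
  | inr lα =>
    obtain ⟨l, α⟩ := lα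
    simp only [Lmap, LinearMap.pi_apply]
    by_cases hiso : ∀ k, ¬ G.Adj l k
    · rw [if_pos hiso, marg_inr, marg_inr]
      cases α <;> cases hl : I l <;>
        simp [ind, hiso, hl, phi_inl, prjC_apply, LinearMap.neg_apply] <;> norm_num
    · rw [if_neg hiso, marg_inr, marg_inr, LinearMap.zero_apply,
        ind_neg (fun h => hiso h.1), ind_neg (fun h => hiso h.1), sub_zero]

lemma key2 (G : SimpleGraph V) (I : V → Bool) :
    Pmap G (marginalPoint G I - marginalPoint G (fun _ => false)) = phi G I := by
  funext w
  cases w with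
  | inl v =>
    simp only [Pmap, LinearMap.pi_apply]
    by_cases h : ∃ k, G.Adj v k
    · rw [dif_pos h]
      have hadj : G.Adj v h.choose := h.choose_spec
      rw [LinearMap.add_apply, prjW_apply, prjW_apply]
      simp only [Pi.sub_apply]
      rw [eval_pair G I hadj, eval_pair G I hadj, eval_pair G _ hadj, eval_pair G _ hadj,
        phi_inl]
      cases hv : I v <;> cases hk : I h.choose <;> simp [ind, hv, hk] <;> norm_num
    · rw [dif_neg h, prjW_apply]
      simp only [Pi.sub_apply]
      rw [marg_inr, marg_inr, phi_inl]
      cases hv : I v <;> simp [ind, h, hv]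
  | inr e =>
    simp only [Pmap, LinearMap.pi_apply]
    rw [prjW_apply, Pi.sub_apply]
    have hfst : Sym2.map Prod.fst (Sym2.map (fun v : V => (v, true)) e) = e := by
      rw [Sym2.map_map]
      have h2 : (Prod.fst ∘ fun v : V => (v, true)) = id := rfl
      rw [h2, Sym2.map_id, id]
    have h1 : marginalPoint G I (Sum.inl (Sym2.map (fun v : V => (v, true)) e)) =
        ind (e ∈ G.edgeSet ∧
          Sym2.map (fun v => (v, I v)) e = Sym2.map (fun v => (v, true)) e) := by
      rw [marg_inl]
      refine ind_congr ⟨?_, ?_⟩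
      · rintro ⟨e', he', hm⟩
        have heq : e' = e := by rw [eq_of_map_eq hm, hfst]
        subst heq
        exact ⟨he', hm⟩
      · rintro ⟨ha, hb⟩
        exact ⟨e, ha, hb⟩
    have h2 : marginalPoint G (fun _ => false) (Sum.inl (Sym2.map (fun v : V => (v, true)) e))
        = 0 := by
      rw [marg_inl]
      refine ind_neg ?_
      rintro ⟨e', he', hm⟩
      have heq : e' = e := by rw [eq_of_map_eq hm, hfst]
      subst heq
      exact map_false_ne_true _ hm
    rw [h1, h2, sub_zero, phi_inr]

/-- restricted coordinates, indexed by vertices and actual edges -/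
noncomputable def psi (G : SimpleGraph V) (I : V → Bool) : (V ⊕ ↥G.edgeSet) → ℝ :=
  fun w =>
    match w with
    | Sum.inl v => ind (I v = true)
    | Sum.inr e => ind (Sym2.map (fun v => (v, I v)) e.1 = Sym2.map (fun v => (v, true)) e.1)

noncomputable def prjE (G : SimpleGraph V) (w : V ⊕ ↥G.edgeSet) :
    ((V ⊕ ↥G.edgeSet) → ℝ) →ₗ[ℝ] ℝ := LinearMap.proj w

/-- extension by zero from restricted coordinates to all coordinates -/
noncomputable def ext0 (G : SimpleGraph V) :
    ((V ⊕ ↥G.edgeSet) → ℝ) →ₗ[ℝ] ((V ⊕ Sym2 V) → ℝ) := by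
  classical
  exact LinearMap.pi fun w =>
    match w with
    | Sum.inl v => prjE G (Sum.inl v)
    | Sum.inr e => if h : e ∈ G.edgeSet then prjE G (Sum.inr ⟨e, h⟩) else 0

lemma phi_eq_ext0 (G : SimpleGraph V) (I : V → Bool) : phi G I = ext0 G (psi G I) := by
  funext w
  cases w with
  | inl v =>
    simp only [ext0, LinearMap.pi_apply]
    rfl
  | inr e =>
    simp only [ext0, LinearMap.pi_apply]
    by_cases h : e ∈ G.edgeSet
    · rw [dif_pos h, phi_inr]
      exact ind_congr ⟨fun hh => hh.2, fun hh => ⟨h, hh⟩⟩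
    · rw [dif_neg h, phi_inr, LinearMap.zero_apply]
      exact ind_neg (fun hh => h hh.1)

/-- standard basis vectors indexed by vertices and edges -/
noncomputable def gvec (G : SimpleGraph V) : (V ⊕ ↥G.edgeSet) → ((V ⊕ Sym2 V) → ℝ) :=
  fun t => Pi.single (Sum.map id Subtype.val t) 1

lemma gvec_li (G : SimpleGraph V) : LinearIndependent ℝ (gvec G) := by
  have h := (Pi.basisFun ℝ (V ⊕ Sym2 V)).linearIndependent
  have h2 := h.comp (Sum.map id (Subtype.val : ↥G.edgeSet → Sym2 V))
    (Function.Injective.sumMap Function.injective_id Subtype.val_injective)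
  have h3 : gvec G = ⇑(Pi.basisFun ℝ (V ⊕ Sym2 V)) ∘
      (Sum.map id (Subtype.val : ↥G.edgeSet → Sym2 V)) := by
    funext t
    simp [gvec, Function.comp, Pi.basisFun_apply]
  rw [h3]
  exact h2

lemma phi_delta (G : SimpleGraph V) (v : V) :
    phi G (fun u => decide (u = v)) = gvec G (Sum.inl v) := by
  funext w
  cases w with
  | inl u =>
    rw [phi_inl]
    have hg : gvec G (Sum.inl v) (Sum.inl u) = if u = v then 1 else 0 := by
      simp [gvec, Pi.single_apply]
    rw [hg]
    by_cases h : u = v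
    · rw [if_pos h, ind_pos (by simp [h])]
    · rw [if_neg h, ind_neg (by simp [h])]
  | inr e =>
    induction e using Sym2.ind with
    | _ a b =>
      rw [phi_inr]
      have hz : gvec G (Sum.inl v) (Sum.inr s(a, b)) = 0 := by simp [gvec, Pi.single_apply]
      rw [hz]
      refine ind_neg ?_
      rintro ⟨he, hm⟩
      have hab : a ≠ b := ((SimpleGraph.mem_edgeSet G).mp he).ne
      rw [mapeq_iff _ hab] at hm
      simp only [decide_eq_true_eq] at hm
      exact hab (hm.1.trans hm.2.symm)


lemma phi_deltaE (G : SimpleGraph V) {j k : V} (hadj : G.Adj j k) :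
    phi G (fun u => decide (u = j) || decide (u = k)) =
      gvec G (Sum.inl j) + gvec G (Sum.inl k) + Pi.single (Sum.inr s(j, k)) 1 := by
  have hjk : j ≠ k := hadj.ne
  have he : s(j, k) ∈ G.edgeSet := (SimpleGraph.mem_edgeSet G).mpr hadj
  funext w
  rw [Pi.add_apply, Pi.add_apply]
  cases w with
  | inl u =>
    rw [phi_inl]
    have hz : (Pi.single (Sum.inr s(j, k)) 1 : (V ⊕ Sym2 V) → ℝ) (Sum.inl u) = 0 := by
      simp [Pi.single_apply]
    rw [hz]
    by_cases h1 : u = j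
    · subst h1
      have h2 : u ≠ k := fun h => hjk h
      rw [ind_pos (by simp)]
      simp [gvec, Pi.single_apply, h2]
    · by_cases h2 : u = k
      · subst h2
        rw [ind_pos (by simp)]
        simp [gvec, Pi.single_apply, h1]
      · rw [ind_neg (by simp [h1, h2])]
        simp [gvec, Pi.single_apply, h1, h2]
  | inr e =>
    induction e using Sym2.ind with
    | _ a b =>
      have hz1 : gvec G (Sum.inl j) (Sum.inr s(a, b)) = 0 := by simp [gvec, Pi.single_apply]
      have hz2 : gvec G (Sum.inl k) (Sum.inr s(a, b)) = 0 := by simp [gvec, Pi.single_apply]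
      rw [phi_inr, hz1, hz2, zero_add, zero_add]
      by_cases hE : s(a, b) ∈ G.edgeSet
      · have hab : a ≠ b := ((SimpleGraph.mem_edgeSet G).mp hE).ne
        have hiff : ((a = j ∨ a = k) ∧ (b = j ∨ b = k)) ↔ s(a, b) = s(j, k) := by
          constructor
          · rintro ⟨(rfl | rfl), (rfl | rfl)⟩
            · exact absurd rfl hab
            · rfl
            · exact Sym2.eq_swap
            · exact absurd rfl hab
          · intro h
            rcases Sym2.eq_iff.mp h with ⟨rfl, rfl⟩ | ⟨rfl, rfl⟩ <;> simp
        have hcond : (s(a, b) ∈ G.edgeSet ∧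
            Sym2.map (fun u => (u, decide (u = j) || decide (u = k))) s(a, b) =
              Sym2.map (fun u => (u, true)) s(a, b)) ↔ s(a, b) = s(j, k) := by
          rw [mapeq_iff _ hab]
          simp only [Bool.or_eq_true, decide_eq_true_eq]
          constructor
          · rintro ⟨-, hm⟩
            exact hiff.mp hm
          · intro h
            exact ⟨hE, hiff.mpr h⟩
        rw [ind_congr hcond]
        by_cases hs : s(a, b) = s(j, k)
        · rw [ind_pos hs]
          simp [Pi.single_apply, hs]
        · rw [ind_neg hs]
          simp [Pi.single_apply, hs]
      · have hne : s(a, b) ≠ s(j, k) := fun h => hE (h ▸ he)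
        rw [ind_neg (fun h => hE h.1)]
        simp [Pi.single_apply, hne]

lemma span_ge (G : SimpleGraph V) :
    Submodule.span ℝ (Set.range (gvec G)) ≤ Submodule.span ℝ (Set.range (phi G)) := by
  rw [Submodule.span_le]
  rintro _ ⟨t, rfl⟩
  simp only [SetLike.mem_coe]
  cases t with
  | inl v =>
    rw [← phi_delta G v]
    exact Submodule.subset_span (Set.mem_range_self _)
  | inr et =>
    obtain ⟨e, he⟩ := et
    revert he
    induction e using Sym2.ind with
    | _ j k =>
      intro he
      have hadj : G.Adj j k := (SimpleGraph.mem_edgeSet G).mp he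
      have hg : gvec G (Sum.inr ⟨s(j, k), he⟩) = Pi.single (Sum.inr s(j, k)) (1 : ℝ) := rfl
      have hrw : Pi.single (Sum.inr s(j, k)) (1 : ℝ) =
          phi G (fun u => decide (u = j) || decide (u = k))
            - gvec G (Sum.inl j) - gvec G (Sum.inl k) := by
        rw [phi_deltaE G hadj]
        abel
      rw [hg, hrw, ← phi_delta G j, ← phi_delta G k]
      exact sub_mem (sub_mem (Submodule.subset_span (Set.mem_range_self _))
        (Submodule.subset_span (Set.mem_range_self _)))
        (Submodule.subset_span (Set.mem_range_self _))

private theorem dim_affineSpan_marginalPoints' (G : SimpleGraph V) :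
    Module.finrank ℝ (affineSpan ℝ (Set.range (marginalPoint G))).direction =
      Fintype.card V + G.edgeSet.ncard := by
  classical
  haveI : Fintype ↥G.edgeSet := (Set.toFinite G.edgeSet).fintype
  have hcard : G.edgeSet.ncard = Fintype.card ↥G.edgeSet := by
    rw [Set.ncard_eq_toFinset_card', Set.toFinset_card]
  have hDspan : (affineSpan ℝ (Set.range (marginalPoint G))).direction =
      Submodule.span ℝ
        (Set.range fun I => marginalPoint G I - marginalPoint G (fun _ => false)) := by
    rw [direction_affineSpan,
      vectorSpan_range_eq_span_range_vsub_right ℝ (marginalPoint G) (fun _ => false)]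
    simp only [vsub_eq_sub]
  have hrange1 : (Set.range fun I => marginalPoint G I - marginalPoint G (fun _ => false))
      = ⇑(Lmap G) '' Set.range (phi G) := by
    rw [← Set.range_comp]
    exact congrArg Set.range (funext fun I => key1 G I)
  have hrange2 : Set.range (phi G)
      = ⇑(Pmap G) ''
        Set.range (fun I => marginalPoint G I - marginalPoint G (fun _ => false)) := by
    rw [← Set.range_comp]
    exact congrArg Set.range (funext fun I => (key2 G I).symm)
  have hrange3 : Set.range (phi G) = ⇑(ext0 G) '' Set.range (psi G) := by
    rw [← Set.range_comp]
    exact congrArg Set.range (funext fun I => phi_eq_ext0 G I)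
  have hub : Module.finrank ℝ (affineSpan ℝ (Set.range (marginalPoint G))).direction ≤
      Module.finrank ℝ (Submodule.span ℝ (Set.range (phi G))) := by
    rw [hDspan, hrange1, Submodule.span_image]
    exact Submodule.finrank_map_le _ _
  have hlb : Module.finrank ℝ (Submodule.span ℝ (Set.range (phi G))) ≤
      Module.finrank ℝ (affineSpan ℝ (Set.range (marginalPoint G))).direction := by
    calc Module.finrank ℝ (Submodule.span ℝ (Set.range (phi G)))
        = Module.finrank ℝ (Submodule.map (Pmap G) (Submodule.span ℝ
            (Set.range fun I => marginalPoint G I - marginalPoint G (fun _ => false)))) := by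
          rw [hrange2, Submodule.span_image]
      _ ≤ Module.finrank ℝ (Submodule.span ℝ
            (Set.range fun I => marginalPoint G I - marginalPoint G (fun _ => false))) :=
          Submodule.finrank_map_le _ _
      _ = Module.finrank ℝ (affineSpan ℝ (Set.range (marginalPoint G))).direction := by
          rw [hDspan]
  have hub2 : Module.finrank ℝ (Submodule.span ℝ (Set.range (phi G))) ≤
      Fintype.card V + G.edgeSet.ncard := by
    calc Module.finrank ℝ (Submodule.span ℝ (Set.range (phi G)))
        = Module.finrank ℝ (Submodule.map (ext0 G)
            (Submodule.span ℝ (Set.range (psi G)))) := by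
          rw [hrange3, Submodule.span_image]
      _ ≤ Module.finrank ℝ (Submodule.span ℝ (Set.range (psi G))) :=
          Submodule.finrank_map_le _ _
      _ ≤ Module.finrank ℝ ((V ⊕ ↥G.edgeSet) → ℝ) := Submodule.finrank_le _
      _ = Fintype.card (V ⊕ ↥G.edgeSet) := Module.finrank_fintype_fun_eq_card ℝ
      _ = Fintype.card V + G.edgeSet.ncard := by
          rw [Fintype.card_sum, hcard]
  have hlb2 : Fintype.card V + G.edgeSet.ncard ≤
      Module.finrank ℝ (Submodule.span ℝ (Set.range (phi G))) := by
    have h1 : Module.finrank ℝ (Submodule.span ℝ (Set.range (gvec G))) =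
        Fintype.card (V ⊕ ↥G.edgeSet) := finrank_span_eq_card (gvec_li G)
    have h2 := Submodule.finrank_mono (span_ge G)
    rw [h1, Fintype.card_sum, ← hcard] at h2
    exact h2
  omega

/-- the polytope `P_G = conv{a_I}` (equivalently, the affine span of the
points `a_I`) has dimension `n + |E(G)|` where `n` is the number of vertices of `G`. -/
theorem dim_affineSpan_marginalPoints {V : Type} [Fintype V] [DecidableEq V]
    (G : SimpleGraph V) :
    Module.finrank ℝ (affineSpan ℝ (Set.range (marginalPoint G))).direction =
      Fintype.card V + G.edgeSet.ncard := by
  exact dim_affineSpan_marginalPoints' G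

end BinaryGraphModels
end

section
/- Define a sequence (d_n)_{n ≥ 1} of rational numbers by d₁ = 1 and d_{n+1} = (1/2) Σ_{i=1}^{n} binom(2n, 2i−1) · d_i · d_{n+1−i} for all n ≥ 1. Then for every real number x with |x| < π/√2, the series Σ_{n=1}^{∞} d_n · x^{2n−1}/(2n−1)! converges and its sum equals √2 · tan(x/√2). -/
open Filter Finset
namespace BinaryGraphModels

private lemma iteratedDeriv_congr_nhds {F G : ℂ → ℂ} {x : ℂ} (n : ℕ)
    (h : F =ᶠ[nhds x] G) : iteratedDeriv n F x = iteratedDeriv n G x := by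
  induction n generalizing F G with
  | zero => simpa using h.eq_of_nhds
  | succ n ih =>
    rw [iteratedDeriv_succ', iteratedDeriv_succ']
    exact ih h.deriv

private lemma iteratedDeriv_cmul (c : ℂ) {F : ℂ → ℂ} (n : ℕ) :
    ∀ x, iteratedDeriv n (fun z => c * F z) x = c * iteratedDeriv n F x := by
  induction n generalizing F with
  | zero => simp
  | succ n ih =>
    intro x
    rw [iteratedDeriv_succ', iteratedDeriv_succ',
      show (deriv fun z => c * F z) = fun z => c * deriv F z from deriv_const_mul_field' c]
    exact ih x

private lemma iteratedDeriv_cadd (c : ℂ) {F : ℂ → ℂ} (n : ℕ) (x : ℂ) :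
    iteratedDeriv (n + 1) (fun z => c + F z) x = iteratedDeriv (n + 1) F x := by
  rw [iteratedDeriv_succ', iteratedDeriv_succ',
    show (deriv fun z => c + F z) = deriv F from deriv_const_add' c]

private lemma analyticAt_deriv {F : ℂ → ℂ} {x : ℂ} (h : AnalyticAt ℂ F x) :
    AnalyticAt ℂ (deriv F) x := by
  have h2 : AnalyticAt ℂ (fun y => (ContinuousLinearMap.apply ℂ ℂ (1 : ℂ)) (fderiv ℂ F y)) x :=
    ((ContinuousLinearMap.apply ℂ ℂ (1 : ℂ)).analyticAt _).comp h.fderiv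
  have : (fun y => (ContinuousLinearMap.apply ℂ ℂ (1 : ℂ)) (fderiv ℂ F y)) = deriv F := by
    funext y; exact fderiv_apply_one_eq_deriv
  rwa [this] at h2

private lemma iteratedDeriv_add_analytic (n : ℕ) :
    ∀ {F G : ℂ → ℂ} {x : ℂ}, AnalyticAt ℂ F x → AnalyticAt ℂ G x →
      iteratedDeriv n (fun z => F z + G z) x = iteratedDeriv n F x + iteratedDeriv n G x := by
  induction n with
  | zero => intro F G x _ _; simp
  | succ n ih =>
    intro F G x hF hG
    have hev : (deriv fun z => F z + G z) =ᶠ[nhds x] fun z => deriv F z + deriv G z := by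
      filter_upwards [hF.eventually_analyticAt, hG.eventually_analyticAt] with z hFz hGz
      exact deriv_add hFz.differentiableAt hGz.differentiableAt
    rw [iteratedDeriv_succ', iteratedDeriv_congr_nhds n hev,
      ih (analyticAt_deriv hF) (analyticAt_deriv hG),
      iteratedDeriv_succ' (n := n) (f := F), iteratedDeriv_succ' (n := n) (f := G)]

private lemma iteratedDeriv_mul_analytic (n : ℕ) :
    ∀ {F G : ℂ → ℂ} {x : ℂ}, AnalyticAt ℂ F x → AnalyticAt ℂ G x →
      iteratedDeriv n (fun z => F z * G z) x
        = ∑ k ∈ Finset.range (n + 1),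
            (n.choose k : ℂ) * (iteratedDeriv k F x * iteratedDeriv (n - k) G x) := by
  induction n with
  | zero => intro F G x _ _; simp
  | succ n ih =>
    intro F G x hF hG
    have hev : (deriv fun z => F z * G z) =ᶠ[nhds x]
        fun z => deriv F z * G z + F z * deriv G z := by
      filter_upwards [hF.eventually_analyticAt, hG.eventually_analyticAt] with z hFz hGz
      exact deriv_mul hFz.differentiableAt hGz.differentiableAt
    rw [iteratedDeriv_succ', iteratedDeriv_congr_nhds n hev,
      iteratedDeriv_add_analytic n (F := fun z => deriv F z * G z) (G := fun z => F z * deriv G z)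
        ((analyticAt_deriv hF).mul hG) (hF.mul (analyticAt_deriv hG)),
      ih (analyticAt_deriv hF) hG, ih hF (analyticAt_deriv hG)]
    have key := Finset.sum_choose_succ_mul
      (fun i j => iteratedDeriv i F x * iteratedDeriv j G x) n
    have e1 : (∑ k ∈ Finset.range (n + 1),
          (n.choose k : ℂ) * (iteratedDeriv k (deriv F) x * iteratedDeriv (n - k) G x))
        = ∑ k ∈ Finset.range (n + 1),
          (n.choose k : ℂ) * (iteratedDeriv (k + 1) F x * iteratedDeriv (n - k) G x) :=
      Finset.sum_congr rfl fun k _ => by rw [← iteratedDeriv_succ']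
    have e2 : (∑ k ∈ Finset.range (n + 1),
          (n.choose k : ℂ) * (iteratedDeriv k F x * iteratedDeriv (n - k) (deriv G) x))
        = ∑ k ∈ Finset.range (n + 1),
          (n.choose k : ℂ) * (iteratedDeriv k F x * iteratedDeriv (n + 1 - k) G x) := by
      refine Finset.sum_congr rfl fun k hk => ?_
      have hk' : k ≤ n := Nat.lt_succ_iff.mp (Finset.mem_range.mp hk)
      rw [show n + 1 - k = (n - k) + 1 by omega, ← iteratedDeriv_succ']
    rw [e1, e2, show n + 1 + 1 = n + 2 from rfl, key]
    exact add_comm _ _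

private lemma sum_range_odd {M : Type*} [AddCommMonoid M] (g : ℕ → M) (n : ℕ)
    (h : ∀ k, Even k → g k = 0) :
    ∑ k ∈ Finset.range (2 * n + 1), g k = ∑ i ∈ Finset.range n, g (2 * i + 1) := by
  induction n with
  | zero => simpa using h 0 Even.zero
  | succ n ih =>
    rw [show 2 * (n + 1) + 1 = (2 * n + 1) + 1 + 1 by ring, Finset.sum_range_succ,
      Finset.sum_range_succ, ih, Finset.sum_range_succ, h (2 * n + 1 + 1) ⟨n + 1, by ring⟩]
    simp


section
variable (d : ℕ → ℚ)

private noncomputable def TT : ℕ → ℂ := fun m => if Odd m then ((d (m / 2 + 1) : ℚ) : ℂ) else 0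

private noncomputable def fC : ℂ → ℂ := fun z =>
  (Real.sqrt 2 : ℂ) * Complex.tan (z / (Real.sqrt 2 : ℂ))

private lemma hs2pos : (0:ℝ) < Real.sqrt 2 := Real.sqrt_pos.mpr (by norm_num)

private lemma hs2ne : ((Real.sqrt 2 : ℝ) : ℂ) ≠ 0 :=
  Complex.ofReal_ne_zero.mpr hs2pos.ne'

private lemma hs2sq : ((Real.sqrt 2 : ℝ) : ℂ) ^ 2 = 2 := by
  rw [← Complex.ofReal_pow, Real.sq_sqrt (by norm_num : (0:ℝ) ≤ 2)]
  norm_num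

private lemma hcosne : ∀ z ∈ Metric.ball (0:ℂ) (Real.pi / Real.sqrt 2),
    Complex.cos (z / (Real.sqrt 2 : ℂ)) ≠ 0 := by
  intro z hz hc
  rw [Complex.cos_eq_zero_iff] at hc
  obtain ⟨k, hk⟩ := hc
  have habs : ‖z / (Real.sqrt 2 : ℂ)‖ < Real.pi / 2 := by
    rw [norm_div, Complex.norm_real, Real.norm_eq_abs, abs_of_pos hs2pos]
    have hz' : ‖z‖ < Real.pi / Real.sqrt 2 := by
      simpa [Metric.mem_ball, Complex.dist_eq] using hz
    have h2 : Real.pi / Real.sqrt 2 / Real.sqrt 2 = Real.pi / 2 := by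
      rw [div_div, Real.mul_self_sqrt (by norm_num : (0:ℝ) ≤ 2)]
    calc ‖z‖ / Real.sqrt 2 < (Real.pi / Real.sqrt 2) / Real.sqrt 2 := by
          exact div_lt_div_of_pos_right hz' hs2pos
    _ = Real.pi / 2 := h2
  rw [hk] at habs
  have : ((2 * (k:ℂ) + 1) * (Real.pi : ℂ) / 2) = (((2 * (k:ℝ) + 1) * Real.pi / 2 : ℝ) : ℂ) := by
    push_cast; ring
  rw [this, Complex.norm_real, Real.norm_eq_abs] at habs
  have h1 : (1:ℝ) ≤ |2 * (k:ℝ) + 1| := by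
    have : ((2*k+1 : ℤ) : ℝ) = 2 * (k:ℝ) + 1 := by push_cast; ring
    rw [← this, ← Int.cast_abs]
    exact_mod_cast Int.one_le_abs (by omega)
  rw [abs_div, abs_mul] at habs
  have hpi := Real.pi_pos
  rw [abs_of_pos hpi] at habs
  have : |(2:ℝ)| = 2 := by norm_num
  rw [this] at habs
  nlinarith

private lemma fC_diff : DifferentiableOn ℂ (fC) (Metric.ball (0:ℂ) (Real.pi / Real.sqrt 2)) := by
  intro z hz
  apply DifferentiableAt.differentiableWithinAt
  have h1 : DifferentiableAt ℂ (fun w : ℂ => w / (Real.sqrt 2 : ℂ)) z :=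
    differentiableAt_id.div_const _
  have h2 : DifferentiableAt ℂ Complex.tan (z / (Real.sqrt 2 : ℂ)) :=
    Complex.differentiableAt_tan.mpr (hcosne z hz)
  exact (h2.comp z h1).const_mul _

private lemma fC_deriv : ∀ z ∈ Metric.ball (0:ℂ) (Real.pi / Real.sqrt 2),
    deriv fC z = 1 + fC z ^ 2 / 2 := by
  intro z hz
  have hc := hcosne z hz
  set w : ℂ := z / (Real.sqrt 2 : ℂ) with hw
  have h1 : HasDerivAt (fun y : ℂ => y / (Real.sqrt 2 : ℂ)) (1 / (Real.sqrt 2 : ℂ)) z := by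
    simpa using (hasDerivAt_id z).div_const ((Real.sqrt 2 : ℝ) : ℂ)
  have h2 : HasDerivAt Complex.tan (1 / Complex.cos w ^ 2) w := Complex.hasDerivAt_tan hc
  have h3 := (h2.comp z h1).const_mul ((Real.sqrt 2 : ℝ) : ℂ)
  have hd : deriv fC z = (Real.sqrt 2 : ℂ) * (1 / Complex.cos w ^ 2 * (1 / (Real.sqrt 2 : ℂ))) :=
    h3.deriv
  rw [hd]
  have key : (1:ℂ) / Complex.cos w ^ 2 = 1 + Complex.tan w ^ 2 := by
    rw [Complex.tan_eq_sin_div_cos, div_pow]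
    have hc2 : Complex.cos w ^ 2 ≠ 0 := pow_ne_zero 2 hc
    field_simp
    exact (Complex.cos_sq_add_sin_sq w).symm
  rw [key]
  show _ = 1 + ((Real.sqrt 2 : ℂ) * Complex.tan w) ^ 2 / 2
  rw [mul_pow, hs2sq]
  field_simp

private lemma fC_iteratedDeriv (h1 : d 1 = 1)
    (hrec : ∀ n : ℕ, 1 ≤ n →
      d (n + 1) = (1 / 2) * ∑ i ∈ Finset.Icc 1 n,
        (Nat.choose (2 * n) (2 * i - 1) : ℚ) * d i * d (n + 1 - i)) :
    ∀ m : ℕ, iteratedDeriv m fC 0 = TT d m := by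
  have hrpos : 0 < Real.pi / Real.sqrt 2 := div_pos Real.pi_pos hs2pos
  have h0mem : (0:ℂ) ∈ Metric.ball (0:ℂ) (Real.pi / Real.sqrt 2) := Metric.mem_ball_self hrpos
  have hnhds : Metric.ball (0:ℂ) (Real.pi / Real.sqrt 2) ∈ nhds (0:ℂ) :=
    Metric.isOpen_ball.mem_nhds h0mem
  have hfa0 : AnalyticAt ℂ fC 0 := fC_diff.analyticAt hnhds
  have heq : deriv fC =ᶠ[nhds (0:ℂ)] fun z => 1 + fC z ^ 2 / 2 :=
    Filter.eventually_of_mem hnhds fC_deriv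
  have hfC0 : fC 0 = 0 := by simp [fC]
  intro m
  induction m using Nat.strong_induction_on with
  | _ m ih =>
  obtain _ | m := m
  · simp [TT, hfC0]
  obtain _ | p := m
  · rw [iteratedDeriv_one, fC_deriv 0 h0mem, hfC0]
    norm_num [TT]
    exact_mod_cast h1.symm
  · -- m = p + 2
    have hstep : iteratedDeriv (p + 2) fC 0 = (1/2 : ℂ) * ∑ k ∈ Finset.range (p + 2),
        ((p+1).choose k : ℂ) * (iteratedDeriv k fC 0 * iteratedDeriv (p + 1 - k) fC 0) := by
      rw [show p + 2 = (p + 1) + 1 from rfl, iteratedDeriv_succ',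
        iteratedDeriv_congr_nhds _ heq, iteratedDeriv_cadd,
        show (fun z => fC z ^ 2 / 2) = (fun z => (1/2 : ℂ) * (fC z * fC z)) from
          funext fun z => by ring,
        iteratedDeriv_cmul, iteratedDeriv_mul_analytic (p + 1) hfa0 hfa0]
    rw [hstep]
    have hsum : ∑ k ∈ Finset.range (p + 2),
        ((p+1).choose k : ℂ) * (iteratedDeriv k fC 0 * iteratedDeriv (p + 1 - k) fC 0)
        = ∑ k ∈ Finset.range (p + 2), ((p+1).choose k : ℂ) * (TT d k * TT d (p + 1 - k)) := by
      refine Finset.sum_congr rfl fun k hk => ?_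
      have hk' : k < p + 2 := Finset.mem_range.mp hk
      rw [ih k hk', ih (p + 1 - k) (by omega)]
    rw [hsum]
    rcases Nat.even_or_odd (p + 1) with he | ho
    · -- p+1 = 2n even, target TT (p+2) = d (n+1)
      obtain ⟨n, hn⟩ := he
      have hn' : p + 1 = 2 * n := by omega
      have hn1 : 1 ≤ n := by omega
      have hO : Odd (p + 2) := ⟨n, by omega⟩
      have hT2 : TT d (p + 2) = ((d (n + 1) : ℚ) : ℂ) := by
        rw [TT, if_pos hO]
        congr 2
        omega
      rw [hT2]
      have hz : ∀ k, Even k → ((p+1).choose k : ℂ) * (TT d k * TT d (p + 1 - k)) = 0 := by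
        intro k hk
        have : ¬ Odd k := Nat.not_odd_iff_even.mpr hk
        simp [TT, this]
      have hodd : ∑ k ∈ Finset.range (p + 2),
          ((p+1).choose k : ℂ) * (TT d k * TT d (p + 1 - k))
          = ∑ i ∈ Finset.range n,
            ((p+1).choose (2*i+1) : ℂ) * (TT d (2*i+1) * TT d (p + 1 - (2*i+1))) := by
        rw [show p + 2 = 2 * n + 1 by omega]
        exact sum_range_odd _ n hz
      rw [hodd]
      have hterm : ∀ i ∈ Finset.range n,
          ((p+1).choose (2*i+1) : ℂ) * (TT d (2*i+1) * TT d (p + 1 - (2*i+1)))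
          = ((2*n).choose (2*i+1) : ℂ) * (((d (i+1) : ℚ) : ℂ) * ((d (n-i) : ℚ) : ℂ)) := by
        intro i hi
        have hi' : i < n := Finset.mem_range.mp hi
        have hO1 : Odd (2*i+1) := ⟨i, by omega⟩
        have he2 : p + 1 - (2*i+1) = 2*(n-i-1)+1 := by omega
        have hO2 : Odd (2*(n-i-1)+1) := ⟨n-i-1, by omega⟩
        rw [he2, hn', TT, TT, if_pos hO1, if_pos hO2,
          show (2*i+1)/2 + 1 = i + 1 by omega,
          show (2*(n-i-1)+1)/2 + 1 = n - i by omega]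
      rw [Finset.sum_congr rfl hterm]
      -- use the recurrence
      have hrc := hrec n hn1
      have hrcC : ((d (n+1) : ℚ) : ℂ) = (1/2 : ℂ) * ∑ i ∈ Finset.Icc 1 n,
          ((2*n).choose (2*i-1) : ℂ) * ((d i : ℚ) : ℂ) * ((d (n+1-i) : ℚ) : ℂ) := by
        rw [hrc]
        push_cast
        ring
      rw [hrcC]
      congr 1
      rw [← Finset.Ico_add_one_right_eq_Icc, Finset.sum_Ico_eq_sum_range]
      refine Finset.sum_congr rfl fun i hi => ?_
      have hi' : i < n := Finset.mem_range.mp hi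
      have : 2 * (1 + i) - 1 = 2 * i + 1 := by omega
      rw [this, show 1 + i = i + 1 by omega, show n + 1 - (i + 1) = n - i by omega]
      ring
    · -- p+1 odd: target 0
      have hO : ¬ Odd (p + 2) := by
        rcases ho with ⟨j, hj⟩
        rw [Nat.odd_iff]; omega
      have hT2 : TT d (p + 2) = 0 := by rw [TT, if_neg hO]
      have hz0 : ∀ k ∈ Finset.range (p + 2),
          ((p+1).choose k : ℂ) * (TT d k * TT d (p + 1 - k)) = 0 := by
        intro k hk
        rcases Nat.even_or_odd k with hk2 | hk2
        · have : ¬ Odd k := Nat.not_odd_iff_even.mpr hk2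
          simp [TT, this]
        · have : ¬ Odd (p + 1 - k) := by
            rcases ho with ⟨j, hj⟩
            rcases hk2 with ⟨i, hi⟩
            rw [Nat.odd_iff]; omega
          simp [TT, this]
      rw [Finset.sum_eq_zero hz0, mul_zero, hT2]
end

/-- if `(d_n)` satisfies `d₁ = 1` and the convolution recurrence
`d_{n+1} = (1/2) Σ_{i=1}^{n} C(2n, 2i-1) d_i d_{n+1-i}`, then for every real `x` with
`|x| < π/√2` the series `Σ_{n≥1} d_n x^{2n-1}/(2n-1)!` converges, with sum
`√2 · tan(x/√2)`. -/
theorem chain_degree_generating_function (d : ℕ → ℚ) (h1 : d 1 = 1)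
    (hrec : ∀ n : ℕ, 1 ≤ n →
      d (n + 1) = (1 / 2) * ∑ i ∈ Finset.Icc 1 n,
        (Nat.choose (2 * n) (2 * i - 1) : ℚ) * d i * d (n + 1 - i)) :
    ∀ x : ℝ, |x| < Real.pi / Real.sqrt 2 →
      HasSum
        (fun n : ℕ =>
          (d (n + 1) : ℝ) * x ^ (2 * (n + 1) - 1) / (Nat.factorial (2 * (n + 1) - 1)))
        (Real.sqrt 2 * Real.tan (x / Real.sqrt 2)) := by
  intro x hx
  have hD := fC_iteratedDeriv d h1 hrec
  have hx' : (x:ℂ) ∈ Metric.ball (0:ℂ) (Real.pi / Real.sqrt 2) := by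
    simpa [Metric.mem_ball, Complex.dist_eq] using hx
  have H := Complex.hasSum_taylorSeries_on_ball fC_diff hx'
  simp only [sub_zero, smul_eq_mul, hD] at H
  have hinj : Function.Injective (fun n : ℕ => 2 * n + 1) := fun a b hab => by
    have h : 2 * a + 1 = 2 * b + 1 := hab
    omega
  have hsupp : ∀ m ∉ Set.range (fun n : ℕ => 2 * n + 1),
      ((m.factorial : ℂ))⁻¹ * ((x:ℂ) ^ m * TT d m) = 0 := by
    intro m hm
    have hno : ¬ Odd m := by
      intro ho
      obtain ⟨j, hj⟩ := ho
      exact hm ⟨m / 2, show 2 * (m / 2) + 1 = m by omega⟩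
    simp [TT, hno]
  have H2 := (hinj.hasSum_iff hsupp).mpr H
  have hfx : fC (x:ℂ) = ((Real.sqrt 2 * Real.tan (x / Real.sqrt 2) : ℝ) : ℂ) := by
    rw [Complex.ofReal_mul, Complex.ofReal_tan, Complex.ofReal_div]
    rfl
  have hterm : ∀ n : ℕ,
      (((d (n + 1) : ℝ) * x ^ (2 * (n + 1) - 1) / ((2 * (n + 1) - 1).factorial : ℝ) : ℝ) : ℂ)
      = (((2 * n + 1).factorial : ℂ))⁻¹ * ((x:ℂ) ^ (2 * n + 1) * TT d (2 * n + 1)) := by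
    intro n
    have hO : Odd (2 * n + 1) := ⟨n, by omega⟩
    rw [show 2 * (n + 1) - 1 = 2 * n + 1 by omega, TT, if_pos hO,
      show (2 * n + 1) / 2 + 1 = n + 1 by omega]
    push_cast
    ring
  rw [hfx] at H2
  have H3 : HasSum (fun n : ℕ =>
      (((d (n + 1) : ℝ) * x ^ (2 * (n + 1) - 1) / ((2 * (n + 1) - 1).factorial : ℝ) : ℝ) : ℂ))
      (((Real.sqrt 2 * Real.tan (x / Real.sqrt 2) : ℝ) : ℂ)) :=
    H2.congr_fun hterm
  have H4 := Complex.reCLM.hasSum H3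
  simpa only [Complex.reCLM_apply, Complex.ofReal_re] using H4

end BinaryGraphModels
end
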